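/- arXiv:0905.4555 — 2 statements merged into one kernel-verified Lean document; each statement's English description precedes it below -/
import Mathlib

section
/- Let n, s ∈ ℤ with s ≥ 2 and 4s ≤ n + 1. Let Q(x) = Σ_{0 ≤ i,j ≤ n} a_{ij} x_i x_j be a quadratic form on ℝ^{n+1} with a_{ij} = a_{ji}, and suppose there exist c ∈ ℝ^{n+1} and r > 0 such that Q(v − c) = r for every v ∈ S(n,s) and Q(u − c) > r for every u ∈ V²_{n,s} \ S(n,s). Then there exists λ > 0 such that Q(x) = λ · q_{n,s}(x) for every x ∈ ℝ^{n+1} with Σ_{i=0}^n x_i = 0. That is, P(n,s) is a perfect Delaunay polytope: up to a positive multiple, q_{n,s} is the unique form for which P(n,s) is a Delaunay polytope of V²_{n,s}. -/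
open Finset

set_option maxHeartbeats 2000000

noncomputable section

/-- The lattice `A_n = {x ∈ ℤ^{n+1} : Σ x_i = 0}`, viewed inside `ℝ^{n+1}`. -/
def latticeA (n : ℕ) : Set (Fin (n+1) → ℝ) :=
  {x | (∀ i, ∃ m : ℤ, x i = m) ∧ ∑ i, x i = 0}

/-- The point lattice `V_{n,s} = {x ∈ ℤ^{n+1} : Σ x_i = s}`. -/
def Vset (n s : ℕ) : Set (Fin (n+1) → ℝ) :=
  {x | (∀ i, ∃ m : ℤ, x i = m) ∧ ∑ i, x i = (s : ℝ)}

/-- The vertex set `W(n+1,s) = {x ∈ {0,1}^{n+1} : Σ x_i = s}`. -/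
def Wset (n s : ℕ) : Set (Fin (n+1) → ℝ) :=
  {x | (∀ i, x i = 0 ∨ x i = 1) ∧ ∑ i, x i = (s : ℝ)}

/-- The vector `v_{n,s} = ((1/4)^{4s}; 0^{n+1-4s})`. -/
def vns (n s : ℕ) : Fin (n+1) → ℝ := fun i => if (i : ℕ) < 4 * s then 1 / 4 else 0

/-- The vector `t_{n,s} = ((1/2)^{2s}; (−1/2)^{2s}; 0^{n+1-4s})`. -/
def tns (n s : ℕ) : Fin (n+1) → ℝ := fun i =>
  if (i : ℕ) < 2 * s then 1 / 2 else if (i : ℕ) < 4 * s then -(1 / 2) else 0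

/-- The point lattice `V²_{n,s} = V_{n,s} ∪ (t_{n,s} + V_{n,s})`. -/
def V2 (n s : ℕ) : Set (Fin (n+1) → ℝ) :=
  Vset n s ∪ (fun x => tns n s + x) '' Vset n s

/-- The vertex set `S(n,s) = W(n+1,s) ∪ {2v_{n,s} − v : v ∈ W(n+1,s)}`
of the polytope `P(n,s)`. -/
def Sns (n s : ℕ) : Set (Fin (n+1) → ℝ) :=
  Wset n s ∪ (fun v => (2 : ℝ) • vns n s - v) '' Wset n s

/-- The quadratic form `q_{n,s}(x) = 2 Σ_{i<4s} x_i² + Σ_{i≥4s} x_i²`. -/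
def qns (n s : ℕ) (x : Fin (n+1) → ℝ) : ℝ :=
  ∑ i : Fin (n+1), (if (i : ℕ) < 4 * s then (2:ℝ) else 1) * (x i) ^ 2

/-! ### Auxiliary bilinear-form machinery -/

def Bf {n : ℕ} (a : Fin (n+1) → Fin (n+1) → ℝ) (x y : Fin (n+1) → ℝ) : ℝ :=
  ∑ i, ∑ j, a i j * x i * y j

def Eij {n : ℕ} (i j : Fin (n+1)) : Fin (n+1) → ℝ :=
  fun m => (if m = i then 1 else 0) - (if m = j then 1 else 0)

lemma Bf_cross {n : ℕ} (a : Fin (n+1) → Fin (n+1) → ℝ) (hsym : ∀ i j, a i j = a j i)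
    (x y : Fin (n+1) → ℝ) :
    ∑ i, ∑ j, a i j * y i * x j = ∑ i, ∑ j, a i j * x i * y j := by
  rw [Finset.sum_comm]
  refine Finset.sum_congr rfl fun p _ => Finset.sum_congr rfl fun q _ => ?_
  rw [hsym q p]; ring

lemma Bf_key {n : ℕ} (a : Fin (n+1) → Fin (n+1) → ℝ) (hsym : ∀ i j, a i j = a j i)
    (x y : Fin (n+1) → ℝ) :
    Bf a (fun k => x k + y k) (fun k => x k - y k) = Bf a x x - Bf a y y := by
  unfold Bf
  have h1 : ∀ i j : Fin (n+1), a i j * (x i + y i) * (x j - y j)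
      = (a i j * x i * x j - a i j * y i * y j) + (a i j * y i * x j - a i j * x i * y j) := by
    intro i j; ring
  simp only [h1, Finset.sum_add_distrib, Finset.sum_sub_distrib]
  rw [Bf_cross a hsym x y]; ring

lemma Bf_sub_left {n : ℕ} (a : Fin (n+1) → Fin (n+1) → ℝ) (x y z : Fin (n+1) → ℝ) :
    Bf a (fun k => x k - y k) z = Bf a x z - Bf a y z := by
  unfold Bf
  have h1 : ∀ i j : Fin (n+1), a i j * (x i - y i) * z j
      = a i j * x i * z j - a i j * y i * z j := by intro i j; ring
  simp only [h1, Finset.sum_sub_distrib]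

lemma Bf_Eij {n : ℕ} (a : Fin (n+1) → Fin (n+1) → ℝ) (x : Fin (n+1) → ℝ) (i j : Fin (n+1)) :
    Bf a x (Eij i j) = ∑ k, x k * (a k i - a k j) := by
  unfold Bf Eij
  refine Finset.sum_congr rfl fun k _ => ?_
  simp only [mul_sub, mul_ite, mul_one, mul_zero, Finset.sum_sub_distrib,
    Finset.sum_ite_eq', Finset.mem_univ, if_true]
  ring

lemma sum_Eij_mul {n : ℕ} (i j : Fin (n+1)) (f : Fin (n+1) → ℝ) :
    ∑ m, Eij i j m * f m = f i - f j := by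
  unfold Eij
  simp only [sub_mul, ite_mul, one_mul, zero_mul, Finset.sum_sub_distrib,
    Finset.sum_ite_eq', Finset.mem_univ, if_true]

lemma sum_ind {n : ℕ} (T : Finset (Fin (n+1))) :
    ∑ k, (if k ∈ T then (1:ℝ) else 0) = T.card := by
  rw [Finset.sum_ite_mem, Finset.univ_inter, Finset.sum_const, nsmul_eq_mul, mul_one]

lemma ind_mem_W {n s : ℕ} (T : Finset (Fin (n+1))) (hT : T.card = s) :
    (fun k => if k ∈ T then (1:ℝ) else 0) ∈ Wset n s := by
  refine ⟨fun i => ?_, ?_⟩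
  · by_cases h : i ∈ T <;> simp [h]
  · rw [sum_ind, hT]

lemma sum_ind_pred {n : ℕ} (p : ℕ → Prop) [DecidablePred p] :
    ∑ k : Fin (n+1), (if p (k : ℕ) then (1:ℝ) else 0)
      = ((range (n+1)).filter p).card := by
  rw [Fin.sum_univ_eq_sum_range (fun m => if p m then (1:ℝ) else 0) (n+1)]
  rw [Finset.sum_boole]

lemma ind_pred_mem_W {n s : ℕ} (p : ℕ → Prop) [DecidablePred p]
    (hcard : ((range (n+1)).filter p).card = s) :
    (fun k : Fin (n+1) => if p (k : ℕ) then (1:ℝ) else 0) ∈ Wset n s := by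
  refine ⟨fun i => ?_, ?_⟩
  · by_cases h : p (i : ℕ) <;> simp [h]
  · rw [sum_ind_pred, hcard]

lemma vns_sum {n s : ℕ} (h4s : 4 * s ≤ n + 1) : ∑ k, vns n s k = (s : ℝ) := by
  have h1 : ∀ k : Fin (n+1), vns n s k = (1/4) * (if (k : ℕ) < 4*s then (1:ℝ) else 0) := by
    intro k; unfold vns; split <;> norm_num
  simp only [h1]
  rw [← Finset.mul_sum, sum_ind_pred (fun m => m < 4*s)]
  have h2 : (range (n+1)).filter (fun m => m < 4*s) = range (4*s) := by
    ext m; simp only [mem_filter, mem_range]; omega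
  rw [h2, Finset.card_range]
  push_cast; ring

/-- `P(n,s)` is a perfect Delaunay polytope: any quadratic form making it a Delaunay
polytope of `V²_{n,s}` agrees, on the hyperplane `Σ x_i = 0` spanned by
`V²_{n,s} − V²_{n,s}`, with a positive multiple of `q_{n,s}`. -/
theorem Pns_perfect (n s : ℕ) (hs : 2 ≤ s) (h4s : 4 * s ≤ n + 1)
    (a : Fin (n+1) → Fin (n+1) → ℝ) (hsym : ∀ i j, a i j = a j i)
    (Q : (Fin (n+1) → ℝ) → ℝ) (hQ : ∀ x, Q x = ∑ i, ∑ j, a i j * x i * x j)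
    (c : Fin (n+1) → ℝ) (r : ℝ) (hr : 0 < r)
    (heq : ∀ v ∈ Sns n s, Q (v - c) = r)
    (hgt : ∀ u ∈ V2 n s \ Sns n s, r < Q (u - c)) :
    ∃ lam : ℝ, 0 < lam ∧
      ∀ x : Fin (n+1) → ℝ, ∑ i, x i = 0 → Q x = lam * qns n s x := by
  classical
  -- basic difference identity
  have hdiff : ∀ (c₀ v w : Fin (n+1) → ℝ),
      Q (v - c₀) - Q (w - c₀)
        = Bf a (fun k => v k + w k - 2*c₀ k) (fun k => v k - w k) := by
    intro c₀ v w
    have h1 := Bf_key a hsym (fun k => v k - c₀ k) (fun k => w k - c₀ k)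
    have h2 : (fun k => (v k - c₀ k) + (w k - c₀ k)) = (fun k => v k + w k - 2*c₀ k) := by
      funext k; ring
    have h3 : (fun k => (v k - c₀ k) - (w k - c₀ k)) = (fun k => v k - w k) := by
      funext k; ring
    rw [h2, h3] at h1
    rw [h1, hQ, hQ]
    rfl
  have hW_eq : ∀ v ∈ Wset n s, Q (v - c) = r := fun v hv => heq v (Or.inl hv)
  -- the four-index relation
  have hP1 : ∀ i j k l : Fin (n+1), i ≠ j → i ≠ k → i ≠ l → j ≠ k → j ≠ l → k ≠ l →
      a k i - a k j - a l i + a l j = 0 := by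
    intro i j k l hij hik hil hjk hjl hkl
    have hcard : s - 2 ≤ (univ \ {i, j, k, l} : Finset (Fin (n+1))).card := by
      have h1 : ({i, j, k, l} : Finset (Fin (n+1))).card ≤ 4 := by
        calc ({i, j, k, l} : Finset (Fin (n+1))).card
            ≤ ({j, k, l} : Finset (Fin (n+1))).card + 1 := Finset.card_insert_le _ _
          _ ≤ (({k, l} : Finset (Fin (n+1))).card + 1) + 1 :=
              Nat.add_le_add_right (Finset.card_insert_le _ _) 1
          _ ≤ ((({l} : Finset (Fin (n+1))).card + 1) + 1) + 1 :=
              Nat.add_le_add_right (Nat.add_le_add_right (Finset.card_insert_le _ _) 1) 1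
          _ = 4 := by simp
      have h2 := Finset.card_sdiff_of_subset (Finset.subset_univ ({i, j, k, l} : Finset (Fin (n+1))))
      rw [Finset.card_univ, Fintype.card_fin] at h2
      omega
    obtain ⟨T', hT'sub, hT'card⟩ := Finset.exists_subset_card_eq hcard
    have hmem : ∀ m : Fin (n+1), m ∈ T' → m ≠ i ∧ m ≠ j ∧ m ≠ k ∧ m ≠ l := by
      intro m hm
      have := hT'sub hm
      simp only [Finset.mem_sdiff, Finset.mem_insert, Finset.mem_singleton] at this
      tauto
    have hiT : i ∉ T' := fun h => (hmem i h).1 rfl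
    have hjT : j ∉ T' := fun h => (hmem j h).2.1 rfl
    have hkT : k ∉ T' := fun h => (hmem k h).2.2.1 rfl
    have hlT : l ∉ T' := fun h => (hmem l h).2.2.2 rfl
    -- the four 0/1 vertices
    set A1 := insert k (insert i T') with hA1
    set A2 := insert k (insert j T') with hA2
    set A3 := insert l (insert i T') with hA3
    set A4 := insert l (insert j T') with hA4
    have hcard1 : A1.card = s := by
      rw [hA1, Finset.card_insert_of_notMem (by simp [hik.symm, hkT]),
        Finset.card_insert_of_notMem hiT, hT'card]; omega
    have hcard2 : A2.card = s := by
      rw [hA2, Finset.card_insert_of_notMem (by simp [hjk.symm, hkT]),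
        Finset.card_insert_of_notMem hjT, hT'card]; omega
    have hcard3 : A3.card = s := by
      rw [hA3, Finset.card_insert_of_notMem (by simp [hil.symm, hlT]),
        Finset.card_insert_of_notMem hiT, hT'card]; omega
    have hcard4 : A4.card = s := by
      rw [hA4, Finset.card_insert_of_notMem (by simp [hjl.symm, hlT]),
        Finset.card_insert_of_notMem hjT, hT'card]; omega
    set v1 : Fin (n+1) → ℝ := fun m => if m ∈ A1 then 1 else 0 with hv1
    set v2 : Fin (n+1) → ℝ := fun m => if m ∈ A2 then 1 else 0 with hv2
    set v3 : Fin (n+1) → ℝ := fun m => if m ∈ A3 then 1 else 0 with hv3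
    set v4 : Fin (n+1) → ℝ := fun m => if m ∈ A4 then 1 else 0 with hv4
    have hq1 := hW_eq v1 (ind_mem_W A1 hcard1)
    have hq2 := hW_eq v2 (ind_mem_W A2 hcard2)
    have hq3 := hW_eq v3 (ind_mem_W A3 hcard3)
    have hq4 := hW_eq v4 (ind_mem_W A4 hcard4)
    have e1 : Bf a (fun m => v1 m + v2 m - 2*c m) (fun m => v1 m - v2 m) = 0 := by
      rw [← hdiff c v1 v2, hq1, hq2, sub_self]
    have e2 : Bf a (fun m => v3 m + v4 m - 2*c m) (fun m => v3 m - v4 m) = 0 := by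
      rw [← hdiff c v3 v4, hq3, hq4, sub_self]
    have hd12 : (fun m => v1 m - v2 m) = Eij i j := by
      funext m
      simp only [hv1, hv2, hA1, hA2, Eij, Finset.mem_insert]
      by_cases hmi : m = i <;> by_cases hmj : m = j
      · exact absurd (hmi ▸ hmj) hij
      · simp [hmi, hmj, hik, hij, hiT]
      · simp [hmi, hmj, hjk, hij.symm, hjT]
      · simp [hmi, hmj]
    have hd34 : (fun m => v3 m - v4 m) = Eij i j := by
      funext m
      simp only [hv3, hv4, hA3, hA4, Eij, Finset.mem_insert]
      by_cases hmi : m = i <;> by_cases hmj : m = j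
      · exact absurd (hmi ▸ hmj) hij
      · simp [hmi, hmj, hil, hij, hiT]
      · simp [hmi, hmj, hjl, hij.symm, hjT]
      · simp [hmi, hmj]
    rw [hd12] at e1; rw [hd34] at e2
    have e3 : Bf a (fun m => (v1 m + v2 m - 2*c m) - (v3 m + v4 m - 2*c m)) (Eij i j) = 0 := by
      rw [Bf_sub_left a _ _ (Eij i j), e1, e2, sub_self]
    have hXY : (fun m => (v1 m + v2 m - 2*c m) - (v3 m + v4 m - 2*c m))
        = (fun m => 2 * Eij k l m) := by
      funext m
      simp only [hv1, hv2, hv3, hv4, hA1, hA2, hA3, hA4, Eij, Finset.mem_insert]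
      by_cases hmk : m = k <;> by_cases hml : m = l
      · exact absurd (hmk ▸ hml) hkl
      · simp [hmk, hml, hik.symm, hjk.symm, hkl, hkT]; ring
      · simp [hmk, hml, hil.symm, hjl.symm, hkl.symm, hlT]; ring
      · simp [hmk, hml]
    rw [hXY] at e3
    rw [Bf_Eij] at e3
    have e4 : ∑ m, 2 * Eij k l m * (a m i - a m j)
        = 2 * ∑ m, Eij k l m * (a m i - a m j) := by
      rw [Finset.mul_sum]; exact Finset.sum_congr rfl fun m _ => by ring
    rw [e4, sum_Eij_mul] at e3
    linarith
  -- distinguished indices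
  have h8 : 8 ≤ n + 1 := by omega
  set i0 : Fin (n+1) := ⟨0, by omega⟩ with hi0
  set i1 : Fin (n+1) := ⟨1, by omega⟩ with hi1
  set i2 : Fin (n+1) := ⟨2, by omega⟩ with hi2
  have h01 : i0 ≠ i1 := by simp [hi0, hi1, Fin.ext_iff]
  have h02 : i0 ≠ i2 := by simp [hi0, hi2, Fin.ext_iff]
  have h12 : i1 ≠ i2 := by simp [hi1, hi2, Fin.ext_iff]
  set b : Fin (n+1) → ℝ := fun i =>
    if i = i0 then (a i0 i1 + a i0 i2 - a i1 i2)/2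
    else if i = i1 then (a i0 i1 + a i1 i2 - a i0 i2)/2
    else (a i i0 + a i i1 - a i0 i1)/2 with hbdef
  have hbi0 : b i0 = (a i0 i1 + a i0 i2 - a i1 i2)/2 := by
    simp [hbdef]
  have hbi1 : b i1 = (a i0 i1 + a i1 i2 - a i0 i2)/2 := by
    simp [hbdef, h01.symm]
  have hbelse : ∀ i : Fin (n+1), i ≠ i0 → i ≠ i1 → b i = (a i i0 + a i i1 - a i0 i1)/2 := by
    intro i h0 h1; simp [hbdef, h0, h1]
  have hb : ∀ i j : Fin (n+1), i ≠ j → a i j = b i + b j := by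
    have main : ∀ i : Fin (n+1), i ≠ i0 → i ≠ i1 →
        a i0 i + a i1 i2 = a i0 i2 + a i1 i := by
      intro i h0 h1
      by_cases h2 : i = i2
      · rw [h2]
      · have key := hP1 i i2 i0 i1 h2 h0 h1 h02.symm h12.symm h01
        linarith
    intro i j hij
    by_cases hi0' : i = i0
    · subst hi0'
      by_cases hj1' : j = i1
      · subst hj1'; rw [hbi0, hbi1]; ring
      · have hj0' : j ≠ i0 := hij.symm
        rw [hbi0, hbelse j hj0' hj1']
        have := main j hj0' hj1'
        linarith [hsym j i0, hsym j i1]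
    · by_cases hi1' : i = i1
      · subst hi1'
        by_cases hj0' : j = i0
        · subst hj0'; rw [hbi0, hbi1]; linarith [hsym i1 i0]
        · have hj1' : j ≠ i1 := hij.symm
          rw [hbi1, hbelse j hj0' hj1']
          have := main j hj0' hj1'
          linarith [hsym j i0, hsym j i1, hsym i1 j]
      · by_cases hj0' : j = i0
        · subst hj0'
          rw [hbi0, hbelse i hi0' hi1']
          have := main i hi0' hi1'
          linarith [hsym i i0, hsym i i1, hsym i0 i]
        · by_cases hj1' : j = i1
          · subst hj1'
            rw [hbi1, hbelse i hi0' hi1']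
            have := main i hi0' hi1'
            linarith [hsym i i0, hsym i i1, hsym i1 i]
          · rw [hbelse i hi0' hi1', hbelse j hj0' hj1']
            have k1 := hP1 j i1 i i0 hj1' hij.symm hj0' (Ne.symm hi1') h01.symm hi0'
            have k2 := hP1 j i0 i i1 hj0' hij.symm hj1' (Ne.symm hi0') h01 hi1'
            linarith [hsym i1 i0, hsym j i0, hsym j i1, hsym i i0, hsym i i1]
  set d : Fin (n+1) → ℝ := fun i => a i i - 2 * b i with hddef
  have haa : ∀ k i : Fin (n+1), a k i = b k + b i + (if k = i then d i else 0) := by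
    intro k i
    by_cases h : k = i
    · subst h; rw [if_pos rfl]; simp only [hddef]; ring
    · rw [if_neg h, hb k i h]; ring
  have hBE : ∀ (x : Fin (n+1) → ℝ) (i j : Fin (n+1)), i ≠ j →
      Bf a x (Eij i j) = (b i - b j) * (∑ k, x k) + d i * x i - d j * x j := by
    intro x i j hij
    rw [Bf_Eij]
    have hpt : ∀ k, x k * (a k i - a k j)
        = x k * (b i - b j) + (if k = i then d i * x k else 0)
          - (if k = j then d j * x k else 0) := by
      intro k
      rw [haa k i, haa k j]
      by_cases hk : k = i
      · subst hk; rw [if_pos rfl, if_pos rfl, if_neg hij, if_neg hij]; ring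
      · rw [if_neg hk, if_neg hk]
        by_cases hk' : k = j
        · subst hk'; rw [if_pos rfl, if_pos rfl]; ring
        · rw [if_neg hk', if_neg hk']; ring
    rw [Finset.sum_congr rfl fun k _ => hpt k]
    simp only [Finset.sum_add_distrib, Finset.sum_sub_distrib, Finset.sum_ite_eq',
      Finset.mem_univ, if_true, ← Finset.sum_mul]
    ring
  have hswap : ∀ c₀ : Fin (n+1) → ℝ, (∀ v ∈ Wset n s, Q (v - c₀) = r) →
      ∀ i j : Fin (n+1), i ≠ j →
      (b i - b j) * (2*(s:ℝ) - 2*(∑ k, c₀ k)) + d i * (1 - 2*c₀ i) - d j * (1 - 2*c₀ j) = 0 := by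
    intro c₀ hall i j hij
    have hcard : s - 1 ≤ (univ \ {i, j} : Finset (Fin (n+1))).card := by
      have h1 : ({i, j} : Finset (Fin (n+1))).card ≤ 2 := by
        apply le_trans (Finset.card_insert_le _ _); simp
      have h2 := Finset.card_sdiff_of_subset (Finset.subset_univ ({i, j} : Finset (Fin (n+1))))
      rw [Finset.card_univ, Fintype.card_fin] at h2
      omega
    obtain ⟨T', hT'sub, hT'card⟩ := Finset.exists_subset_card_eq hcard
    have hmem : ∀ m : Fin (n+1), m ∈ T' → m ≠ i ∧ m ≠ j := by
      intro m hm
      have := hT'sub hm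
      simp only [Finset.mem_sdiff, Finset.mem_insert, Finset.mem_singleton] at this
      tauto
    have hiT : i ∉ T' := fun h => (hmem i h).1 rfl
    have hjT : j ∉ T' := fun h => (hmem j h).2 rfl
    set A1 := insert i T' with hA1
    set A2 := insert j T' with hA2
    have hcA1 : A1.card = s := by
      rw [hA1, Finset.card_insert_of_notMem hiT, hT'card]; omega
    have hcA2 : A2.card = s := by
      rw [hA2, Finset.card_insert_of_notMem hjT, hT'card]; omega
    set v : Fin (n+1) → ℝ := fun m => if m ∈ A1 then 1 else 0 with hvdef
    set w : Fin (n+1) → ℝ := fun m => if m ∈ A2 then 1 else 0 with hwdef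
    have hvW : v ∈ Wset n s := ind_mem_W A1 hcA1
    have hwW : w ∈ Wset n s := ind_mem_W A2 hcA2
    have e1 : Bf a (fun m => v m + w m - 2*c₀ m) (fun m => v m - w m) = 0 := by
      rw [← hdiff c₀ v w, hall v hvW, hall w hwW, sub_self]
    have hvw : (fun m => v m - w m) = Eij i j := by
      funext m
      simp only [hvdef, hwdef, hA1, hA2, Eij, Finset.mem_insert]
      by_cases hmi : m = i <;> by_cases hmj : m = j
      · exact absurd (hmi ▸ hmj) hij
      · simp [hmi, hmj, hij, hiT]
      · simp [hmi, hmj, hij.symm, hjT]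
      · simp [hmi, hmj]
    rw [hvw, hBE _ i j hij] at e1
    have hsv : ∑ m, v m = (s:ℝ) := hvW.2
    have hsw : ∑ m, w m = (s:ℝ) := hwW.2
    have hsum : ∑ m, (v m + w m - 2*c₀ m) = 2*(s:ℝ) - 2*(∑ k, c₀ k) := by
      simp only [Finset.sum_sub_distrib, Finset.sum_add_distrib, ← Finset.mul_sum]
      rw [hsv, hsw]; ring
    have hvi : v i = 1 := by simp [hvdef, hA1]
    have hvj : v j = 0 := by simp [hvdef, hA1, hij.symm, hjT]
    have hwi : w i = 0 := by simp [hwdef, hA2, hij, hiT]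
    have hwj : w j = 1 := by simp [hwdef, hA2]
    simp only [hsum, hvi, hvj, hwi, hwj] at e1
    linarith [e1]
  have hQneg : ∀ y : Fin (n+1) → ℝ, Q (-y) = Q y := by
    intro y
    rw [hQ, hQ]
    refine Finset.sum_congr rfl fun i _ => Finset.sum_congr rfl fun j _ => ?_
    simp only [Pi.neg_apply]; ring
  set c' : Fin (n+1) → ℝ := fun k => 2 * vns n s k - c k with hc'def
  have hW_eq' : ∀ v ∈ Wset n s, Q (v - c') = r := by
    intro v hv
    have h1 : ((2:ℝ) • vns n s - v) ∈ Sns n s := Or.inr ⟨v, hv, rfl⟩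
    have h2 := heq _ h1
    have h3 : (v - c') = -((2:ℝ) • vns n s - v - c) := by
      funext k
      simp only [Pi.sub_apply, Pi.neg_apply, Pi.smul_apply, smul_eq_mul, hc'def]
      ring
    rw [h3, hQneg, h2]
  have hsumc' : ∑ k, c' k = 2*(s:ℝ) - ∑ k, c k := by
    simp only [hc'def, Finset.sum_sub_distrib, ← Finset.mul_sum, vns_sum h4s]
  have h04s : (0:ℕ) < 4*s := by omega
  have hvns0 : vns n s i0 = 1/4 := by
    simp [vns, hi0, h04s]
  have hd2 : ∀ i : Fin (n+1), d i * (2 - 4 * vns n s i) = d i0 := by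
    intro i
    by_cases hii : i = i0
    · subst hii; rw [hvns0]; ring
    · have e1 := hswap c hW_eq i i0 hii
      have e2 := hswap c' hW_eq' i i0 hii
      rw [hsumc'] at e2
      have hc'i : c' i = 2 * vns n s i - c i := rfl
      have hc'i0 : c' i0 = 2 * vns n s i0 - c i0 := rfl
      rw [hc'i, hc'i0, hvns0] at e2
      linear_combination e1 + e2
  set lam : ℝ := d i0 / 2 with hlam
  have hmain : ∀ x : Fin (n+1) → ℝ, (∑ k, x k) = 0 → Q x = lam * qns n s x := by
    intro x hx
    rw [hQ]
    have step1 : ∀ i : Fin (n+1), ∑ j, a i j * x i * x j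
        = (b i * x i) * (∑ j, x j) + x i * (∑ j, b j * x j) + d i * x i * x i := by
      intro i
      have hpt : ∀ j : Fin (n+1), a i j * x i * x j
          = (b i * x i) * x j + x i * (b j * x j) + (if i = j then d j * x i * x j else 0) := by
        intro j
        rw [haa i j]
        by_cases h : i = j
        · subst h; rw [if_pos rfl, if_pos rfl]; ring
        · rw [if_neg h, if_neg h]; ring
      rw [Finset.sum_congr rfl fun j _ => hpt j]
      simp only [Finset.sum_add_distrib, Finset.sum_ite_eq, Finset.mem_univ, if_true,
        ← Finset.mul_sum]
    rw [Finset.sum_congr rfl fun i _ => step1 i]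
    simp only [Finset.sum_add_distrib, ← Finset.sum_mul, hx, mul_zero, zero_mul,
      zero_add, add_zero, Finset.sum_const_zero]
    rw [qns, Finset.mul_sum]
    refine Finset.sum_congr rfl fun i _ => ?_
    have hdi2 := hd2 i
    by_cases h : (i:ℕ) < 4*s
    · have hvi : vns n s i = 1/4 := by simp [vns, h]
      rw [hvi] at hdi2
      have hdi : d i = 2 * lam := by rw [hlam]; linear_combination hdi2
      rw [if_pos h, hdi]; ring
    · have hvi : vns n s i = 0 := by simp [vns, h]
      rw [hvi] at hdi2
      have hdi : d i = lam := by rw [hlam]; linear_combination hdi2 / 2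
      rw [if_neg h, hdi]; ring
  refine ⟨lam, ?_, fun x hx => hmain x hx⟩
  -- positivity of lam, using one point of V² \\ S
  set v₀ : Fin (n+1) → ℝ := fun k => if (k:ℕ) < s then 1 else 0 with hv0def
  set z : Fin (n+1) → ℝ := fun k => if 1 ≤ (k:ℕ) ∧ (k:ℕ) ≤ s then 1 else 0 with hzdef
  have hv0W : v₀ ∈ Wset n s := by
    have h : (range (n+1)).filter (fun m => m < s) = range s := by
      ext m; simp only [mem_filter, mem_range]; omega
    exact ind_pred_mem_W (fun m => m < s) (by rw [h, Finset.card_range])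
  have hzW : z ∈ Wset n s := by
    have h : (range (n+1)).filter (fun m => 1 ≤ m ∧ m ≤ s) = Finset.Icc 1 s := by
      ext m; simp only [mem_filter, mem_range, Finset.mem_Icc]; omega
    exact ind_pred_mem_W (fun m => 1 ≤ m ∧ m ≤ s) (by rw [h, Nat.card_Icc]; omega)
  set u : Fin (n+1) → ℝ := fun k => 2 * v₀ k - z k with hudef
  have huV : u ∈ V2 n s := by
    left
    refine ⟨fun k => ?_, ?_⟩
    · by_cases h1 : (k:ℕ) < s <;> by_cases h2 : 1 ≤ (k:ℕ) ∧ (k:ℕ) ≤ s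
      · exact ⟨1, by norm_num [hudef, hv0def, hzdef, h1, h2]⟩
      · exact ⟨2, by norm_num [hudef, hv0def, hzdef, h1, h2]⟩
      · exact ⟨-1, by norm_num [hudef, hv0def, hzdef, h1, h2]⟩
      · exact ⟨0, by norm_num [hudef, hv0def, hzdef, h1, h2]⟩
    · have h1 : ∑ k, v₀ k = (s:ℝ) := hv0W.2
      have h2 : ∑ k, z k = (s:ℝ) := hzW.2
      simp only [hudef, Finset.sum_sub_distrib, ← Finset.mul_sum]
      rw [h1, h2]; ring
  have hi0s : ((i0:ℕ) < s) := by rw [hi0]; show 0 < s; omega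
  have hi0z : ¬(1 ≤ (i0:ℕ) ∧ (i0:ℕ) ≤ s) := by rw [hi0]; show ¬(1 ≤ 0 ∧ 0 ≤ s); omega
  have hu0 : u i0 = 2 := by norm_num [hudef, hv0def, hzdef, hi0s, hi0z]; omega
  have hz0 : z i0 = 0 := by norm_num [hzdef, hi0z]
  have huS : u ∉ Sns n s := by
    intro hu
    rcases hu with hW | ⟨w, hw, hweq⟩
    · rcases hW.1 i0 with h | h <;> rw [hu0] at h <;> norm_num at h
    · have hcf := congrFun hweq i0
      simp only [Pi.sub_apply, Pi.smul_apply, smul_eq_mul] at hcf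
      rw [hvns0, hu0] at hcf
      rcases hw.1 i0 with h | h <;> rw [h] at hcf <;> norm_num at hcf
  have hgtu := hgt u ⟨huV, huS⟩
  have hQv0 := hW_eq v₀ hv0W
  have hQz := hW_eq z hzW
  have hiden : Q (u - c) + Q (z - c) - 2*Q (v₀ - c) - (1/2)*Q (fun k => u k - z k) = 0 := by
    have E : ∑ i : Fin (n+1), ∑ j : Fin (n+1),
        (a i j * (u i - c i) * (u j - c j) + a i j * (z i - c i) * (z j - c j)
          - 2*(a i j * (v₀ i - c i) * (v₀ j - c j))
          - (1/2)*(a i j * (u i - z i) * (u j - z j))) = 0 := by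
      refine Finset.sum_eq_zero fun i _ => Finset.sum_eq_zero fun j _ => ?_
      have hui : u i = 2*v₀ i - z i := rfl
      have huj : u j = 2*v₀ j - z j := rfl
      rw [hui, huj]; ring
    simp only [Finset.sum_add_distrib, Finset.sum_sub_distrib, ← Finset.mul_sum] at E
    simp only [hQ, Pi.sub_apply]
    linarith [E]
  have hQuz : Q (fun k => u k - z k) = 2*(Q (u - c) - r) := by
    rw [hQz, hQv0] at hiden
    linarith
  have hsum0 : ∑ k, (u k - z k) = 0 := by
    have h : ∀ k, u k - z k = 2*v₀ k - 2*z k := fun k => by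
      simp only [hudef]; ring
    simp only [h, Finset.sum_sub_distrib, ← Finset.mul_sum]
    rw [hv0W.2, hzW.2]; ring
  have hqq := hmain (fun k => u k - z k) hsum0
  have hi04 : ((i0:ℕ) < 4*s) := by rw [hi0]; show 0 < 4*s; omega
  have hqpos : 0 < qns n s (fun k => u k - z k) := by
    rw [qns]
    apply Finset.sum_pos'
    · intro i _
      split_ifs <;> positivity
    · refine ⟨i0, Finset.mem_univ _, ?_⟩
      show 0 < (if (i0:ℕ) < 4*s then (2:ℝ) else 1) * (u i0 - z i0)^2
      rw [if_pos hi04, hu0, hz0]; norm_num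
  have h1 : 0 < lam * qns n s (fun k => u k - z k) := by
    rw [← hqq, hQuz]; linarith
  by_contra hneg
  push_neg at hneg
  nlinarith
end
end

section
/- Let n, s ∈ ℤ with s ≥ 2, and suppose 6s < n + 1 if n is odd, and 6s < n if n is even. Then P(n,s) is a Delaunay polytope of V⁴_{n,s} with respect to q_{n,s}: q_{n,s}(v − v_{n,s}) = 3s/2 for every v ∈ S(n,s), and q_{n,s}(u − v_{n,s}) > 3s/2 for every u ∈ V⁴_{n,s} \ S(n,s). -/
open Finset

noncomputable section

/-- The standard basis vector `e_1` (1 in coordinate index 1). -/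
def e1 (n : ℕ) : Fin (n+1) → ℝ := fun i => if (i : ℕ) = 1 then 1 else 0

/-- For `n` odd, the vector
`w_{n,s} = ((1/4)^{2s}; (−1/4)^{2s}; (1/2)^{n+1−4s}) − ((n+1−4s)/2)·e_1`. -/
def wOdd (n s : ℕ) : Fin (n+1) → ℝ := fun i =>
  (if (i : ℕ) < 2 * s then 1 / 4
   else if (i : ℕ) < 4 * s then -(1 / 4) else 1 / 2)
  - (((n : ℝ) + 1 - 4 * s) / 2) * e1 n i

/-- For `n` even, the vector
`w_{n,s} = ((1/4)^{2s}; (−1/4)^{2s}; 0; (1/2)^{n−4s}) − ((n−4s)/2)·e_1`. -/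
def wEven (n s : ℕ) : Fin (n+1) → ℝ := fun i =>
  (if (i : ℕ) < 2 * s then 1 / 4
   else if (i : ℕ) < 4 * s then -(1 / 4)
   else if (i : ℕ) = 4 * s then 0 else 1 / 2)
  - (((n : ℝ) - 4 * s) / 2) * e1 n i

/-- The vector `w_{n,s}`, defined according to the parity of `n`. -/
def wns (n s : ℕ) : Fin (n+1) → ℝ := if Odd n then wOdd n s else wEven n s

/-- The point lattice `V⁴_{n,s} = V²_{n,s} ∪ (w_{n,s} + V²_{n,s})`. -/
def V4 (n s : ℕ) : Set (Fin (n+1) → ℝ) :=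
  V2 n s ∪ (fun x => wns n s + x) '' V2 n s


section Helpers

lemma sum_ind_s15 (n k : ℕ) (hk : k ≤ n+1) (c : ℝ) :
    ∑ i : Fin (n+1), (if (i:ℕ) < k then c else 0) = k * c := by
  rw [Fin.sum_univ_eq_sum_range (fun j => if j < k then c else 0), ← Finset.sum_filter]
  have h : (Finset.range (n+1)).filter (· < k) = Finset.range k := by
    ext i; simp only [Finset.mem_filter, Finset.mem_range]; omega
  rw [h, Finset.sum_const, Finset.card_range, nsmul_eq_mul]

lemma sum_vns (n s : ℕ) (h : 4*s ≤ n+1) : ∑ i, vns n s i = (s:ℝ) := by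
  have := sum_ind_s15 n (4*s) h (1/4)
  simp only [vns]
  rw [this]; push_cast; ring

lemma sum_tns (n s : ℕ) (h : 4*s ≤ n+1) : ∑ i, tns n s i = 0 := by
  have he : ∀ i : Fin (n+1), tns n s i =
      (if (i:ℕ) < 2*s then (1:ℝ) else 0) + (if (i:ℕ) < 4*s then (-(1/2):ℝ) else 0) := by
    intro i
    simp only [tns]
    split_ifs <;> first | omega | norm_num
  rw [Finset.sum_congr rfl (fun i _ => he i), Finset.sum_add_distrib,
    sum_ind_s15 n (2*s) (by omega) 1, sum_ind_s15 n (4*s) h (-(1/2))]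
  push_cast; ring

lemma imul1 (m : ℤ) : (0:ℝ) ≤ (m:ℝ) * ((m:ℝ) - 1) := by
  have h : (0:ℤ) ≤ m * (m-1) := by
    rcases le_or_gt 1 m with h|h
    · nlinarith
    · nlinarith [show m ≤ 0 by omega]
  exact_mod_cast h

lemma imul2 (m : ℤ) : (0:ℝ) ≤ (m:ℝ) * ((m:ℝ) + 1) := by
  have h : (0:ℤ) ≤ m * (m+1) := by
    rcases le_or_gt 0 m with h|h
    · nlinarith
    · nlinarith [show m ≤ -1 by omega]
  exact_mod_cast h

lemma imul1' (m : ℤ) (h0 : (m:ℝ) ≠ 0) (h1 : (m:ℝ) ≠ 1) :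
    (2:ℝ) ≤ (m:ℝ) * ((m:ℝ) - 1) := by
  have h0' : m ≠ 0 := by exact_mod_cast h0
  have h1' : m ≠ 1 := by exact_mod_cast h1
  have h : (2:ℤ) ≤ m * (m-1) := by
    rcases le_or_gt m 0 with h|h
    · nlinarith [show m ≤ -1 by omega]
    · nlinarith [show 2 ≤ m by omega]
  exact_mod_cast h

lemma imul2' (m : ℤ) (h0 : (m:ℝ) ≠ 0) (h1 : (m:ℝ) ≠ -1) :
    (2:ℝ) ≤ (m:ℝ) * ((m:ℝ) + 1) := by
  have h0' : m ≠ 0 := by exact_mod_cast h0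
  have h1' : m ≠ -1 := by exact_mod_cast h1
  have h : (2:ℤ) ≤ m * (m+1) := by
    rcases le_or_gt m 0 with h|h
    · nlinarith [show m ≤ -2 by omega]
    · nlinarith [show 1 ≤ m by omega]
  exact_mod_cast h

lemma q_neg (n s : ℕ) (x : Fin (n+1) → ℝ) : qns n s (-x) = qns n s x := by
  simp [qns]

lemma qW (n s : ℕ) (h : 4*s ≤ n+1) (w : Fin (n+1) → ℝ) (hw : w ∈ Wset n s) :
    qns n s (w - vns n s) = 3 * (s:ℝ) / 2 := by
  obtain ⟨hw1, hw2⟩ := hw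
  have he : ∀ i : Fin (n+1), (if (i:ℕ) < 4*s then (2:ℝ) else 1) * ((w - vns n s) i)^2
      = w i + (if (i:ℕ) < 4*s then (1/8:ℝ) else 0) := by
    intro i
    simp only [Pi.sub_apply, vns]
    rcases lt_or_ge (i:ℕ) (4*s) with h4 | h4
    · rw [if_pos h4, if_pos h4, if_pos h4]
      rcases hw1 i with h0 | h0 <;> rw [h0] <;> norm_num
    · rw [if_neg (by omega), if_neg (by omega), if_neg (by omega)]
      rcases hw1 i with h0 | h0 <;> rw [h0] <;> norm_num
  rw [qns, Finset.sum_congr rfl (fun i _ => he i), Finset.sum_add_distrib, hw2,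
    sum_ind_s15 n (4*s) h (1/8)]
  push_cast; ring

lemma caseA (n s : ℕ) (h4 : 4*s ≤ n+1) (x : Fin (n+1) → ℝ)
    (hx : x ∈ Vset n s) (hW : x ∉ Wset n s) :
    3 * (s:ℝ) / 2 < qns n s (x - vns n s) := by
  obtain ⟨hx1, hx2⟩ := hx
  choose m hm using hx1
  have hbad : ∃ i₀ : Fin (n+1), x i₀ ≠ 0 ∧ x i₀ ≠ 1 := by
    by_contra hc
    push_neg at hc
    exact hW ⟨fun i => or_iff_not_imp_left.mpr (hc i), hx2⟩
  obtain ⟨i₀, h0, h1⟩ := hbad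
  have key : ∀ i : Fin (n+1),
      x i + (if (i:ℕ) < 4*s then (1/8:ℝ) else 0) + (if i = i₀ then (2:ℝ) else 0)
      ≤ (if (i:ℕ) < 4*s then (2:ℝ) else 1) * ((x - vns n s) i)^2 := by
    intro i
    have hg := imul1 (m i)
    simp only [Pi.sub_apply, vns, hm i]
    split_ifs with h4i hE hE
    · subst hE
      have hst := imul1' (m i) (by rw [← hm i]; exact h0) (by rw [← hm i]; exact h1)
      nlinarith
    · nlinarith
    · subst hE
      have hst := imul1' (m i) (by rw [← hm i]; exact h0) (by rw [← hm i]; exact h1)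
      nlinarith
    · nlinarith
  have hsum : ∑ i : Fin (n+1),
      (x i + (if (i:ℕ) < 4*s then (1/8:ℝ) else 0) + (if i = i₀ then (2:ℝ) else 0))
      ≤ qns n s (x - vns n s) := by
    rw [qns]; exact Finset.sum_le_sum (fun i _ => key i)
  rw [Finset.sum_add_distrib, Finset.sum_add_distrib, hx2, sum_ind_s15 n (4*s) h4 (1/8),
    Finset.sum_ite_eq' univ i₀ (fun _ => (2:ℝ))] at hsum
  simp only [mem_univ, if_pos] at hsum
  push_cast at hsum ⊢
  linarith

lemma caseB (n s : ℕ) (h4 : 4*s ≤ n+1) (x : Fin (n+1) → ℝ)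
    (hx : x ∈ Vset n s) (hS : tns n s + x ∉ Sns n s) :
    3 * (s:ℝ) / 2 < qns n s ((tns n s + x) - vns n s) := by
  obtain ⟨hx1, hx2⟩ := hx
  choose m hm using hx1
  by_cases hg : ∀ i : Fin (n+1),
      if (i:ℕ) < 2*s then (x i = 0 ∨ x i = -1)
      else if (i:ℕ) < 4*s then (x i = 0 ∨ x i = 1) else (x i = 0 ∨ x i = -1)
  · exfalso
    apply hS
    refine Or.inr ⟨(2:ℝ) • vns n s - (tns n s + x), ⟨?_, ?_⟩, sub_sub_cancel _ _⟩
    · intro i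
      have hgi := hg i
      simp only [Pi.smul_apply, Pi.sub_apply, Pi.add_apply, vns, tns, smul_eq_mul]
      rcases lt_or_ge (i:ℕ) (2*s) with h2 | h2
      · rw [if_pos h2] at hgi
        have h4i : (i:ℕ) < 4*s := by omega
        simp only [if_pos h2, if_pos h4i]
        rcases hgi with h|h <;> rw [h] <;> norm_num
      · have h2' : ¬ (i:ℕ) < 2*s := by omega
        rw [if_neg h2'] at hgi
        rcases lt_or_ge (i:ℕ) (4*s) with h4i | h4i
        · rw [if_pos h4i] at hgi
          simp only [if_neg h2', if_pos h4i]
          rcases hgi with h|h <;> rw [h] <;> norm_num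
        · have h4i' : ¬ (i:ℕ) < 4*s := by omega
          rw [if_neg h4i'] at hgi
          simp only [if_neg h2', if_neg h4i']
          rcases hgi with h|h <;> rw [h] <;> norm_num
    · show ∑ i, ((2:ℝ) • vns n s - (tns n s + x)) i = (s:ℝ)
      simp only [Pi.smul_apply, Pi.sub_apply, Pi.add_apply, smul_eq_mul]
      rw [Finset.sum_sub_distrib, Finset.sum_add_distrib, ← Finset.mul_sum,
        sum_vns n s h4, sum_tns n s h4, hx2]
      ring
  · push_neg at hg
    obtain ⟨i₀, hb⟩ := hg
    have key : ∀ i : Fin (n+1),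
        (-1) * x i + (-1) * (if (i:ℕ) < 2*s then (1:ℝ) else 0)
          + (9/8) * (if (i:ℕ) < 4*s then (1:ℝ) else 0) + (if i = i₀ then (2:ℝ) else 0)
        ≤ (if (i:ℕ) < 4*s then (2:ℝ) else 1) * (((tns n s + x) - vns n s) i)^2 := by
      intro i
      have hg1 := imul1 (m i)
      have hg2 := imul2 (m i)
      simp only [Pi.sub_apply, Pi.add_apply, tns, vns, hm i]
      rcases lt_or_ge (i:ℕ) (2*s) with h2 | h2
      · have h4i : (i:ℕ) < 4*s := by omega
        simp only [if_pos h2, if_pos h4i]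
        by_cases hE : i = i₀
        · subst hE
          rw [if_pos h2] at hb
          push_neg at hb
          have hst := imul2' (m i) (by rw [← hm i]; exact hb.1) (by rw [← hm i]; exact hb.2)
          simp only [eq_self_iff_true, if_true]
          nlinarith
        · simp only [if_neg hE]
          nlinarith
      · have h2' : ¬ (i:ℕ) < 2*s := by omega
        rcases lt_or_ge (i:ℕ) (4*s) with h4i | h4i
        · simp only [if_neg h2', if_pos h4i]
          by_cases hE : i = i₀
          · subst hE
            rw [if_neg h2', if_pos h4i] at hb
            push_neg at hb
            have hst := imul1' (m i) (by rw [← hm i]; exact hb.1) (by rw [← hm i]; exact hb.2)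
            simp only [eq_self_iff_true, if_true]
            nlinarith
          · simp only [if_neg hE]
            nlinarith
        · have h4i' : ¬ (i:ℕ) < 4*s := by omega
          simp only [if_neg h2', if_neg h4i']
          by_cases hE : i = i₀
          · subst hE
            rw [if_neg h2', if_neg h4i'] at hb
            push_neg at hb
            have hst := imul2' (m i) (by rw [← hm i]; exact hb.1) (by rw [← hm i]; exact hb.2)
            simp only [eq_self_iff_true, if_true]
            nlinarith
          · simp only [if_neg hE]
            nlinarith
    have hsum : ∑ i : Fin (n+1),
        ((-1) * x i + (-1) * (if (i:ℕ) < 2*s then (1:ℝ) else 0)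
          + (9/8) * (if (i:ℕ) < 4*s then (1:ℝ) else 0) + (if i = i₀ then (2:ℝ) else 0))
        ≤ qns n s ((tns n s + x) - vns n s) := by
      rw [qns]; exact Finset.sum_le_sum (fun i _ => key i)
    rw [Finset.sum_add_distrib, Finset.sum_add_distrib, Finset.sum_add_distrib,
      ← Finset.mul_sum, ← Finset.mul_sum, ← Finset.mul_sum, hx2,
      sum_ind_s15 n (2*s) (by omega) 1, sum_ind_s15 n (4*s) h4 1,
      Finset.sum_ite_eq' univ i₀ (fun _ => (2:ℝ))] at hsum
    simp only [mem_univ, if_pos] at hsum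
    push_cast at hsum ⊢
    linarith

lemma caseC_odd (n s : ℕ) (hs : 2 ≤ s) (ho : Odd n) (h6 : 6*s < n+1)
    (x : Fin (n+1) → ℝ) (hx : x ∈ Vset n s) :
    3 * (s:ℝ) / 2 < qns n s ((wOdd n s + x) - vns n s) := by
  obtain ⟨hx1, hx2⟩ := hx
  choose m hm using hx1
  have key : ∀ i : Fin (n+1),
      (-(1/2)) * (if (i:ℕ) < 2*s then (1:ℝ) else 0)
        + (1/4) * (if (i:ℕ) < 4*s then (1:ℝ) else 0) + (1/4 : ℝ)
      ≤ (if (i:ℕ) < 4*s then (2:ℝ) else 1) * (((wOdd n s + x) - vns n s) i)^2 := by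
    intro i
    simp only [Pi.sub_apply, Pi.add_apply, wOdd, e1, vns, hm i]
    rcases lt_or_ge (i:ℕ) (2*s) with h2 | h2
    · have h4i : (i:ℕ) < 4*s := by omega
      simp only [if_pos h2, if_pos h4i]
      by_cases h1 : (i:ℕ) = 1
      · simp only [if_pos h1]
        nlinarith [sq_nonneg ((1/4 - ((n:ℝ) + 1 - 4*s)/2 * 1) + (m i : ℝ) - 1/4)]
      · simp only [if_neg h1]
        nlinarith [sq_nonneg ((m i : ℝ))]
    · have h2' : ¬ (i:ℕ) < 2*s := by omega
      have h1 : ¬ (i:ℕ) = 1 := by omega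
      rcases lt_or_ge (i:ℕ) (4*s) with h4i | h4i
      · simp only [if_neg h2', if_pos h4i, if_neg h1]
        nlinarith [imul1 (m i)]
      · have h4i' : ¬ (i:ℕ) < 4*s := by omega
        simp only [if_neg h2', if_neg h4i', if_neg h1]
        nlinarith [imul2 (m i)]
  have hsum : ∑ i : Fin (n+1),
      ((-(1/2)) * (if (i:ℕ) < 2*s then (1:ℝ) else 0)
        + (1/4) * (if (i:ℕ) < 4*s then (1:ℝ) else 0) + (1/4 : ℝ))
      ≤ qns n s ((wOdd n s + x) - vns n s) := by
    rw [qns]; exact Finset.sum_le_sum (fun i _ => key i)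
  rw [Finset.sum_add_distrib, Finset.sum_add_distrib, ← Finset.mul_sum, ← Finset.mul_sum,
    sum_ind_s15 n (2*s) (by omega) 1, sum_ind_s15 n (4*s) (by omega) 1,
    Finset.sum_const, Finset.card_univ, Fintype.card_fin, nsmul_eq_mul] at hsum
  have h6' : 6 * (s:ℝ) < (n:ℝ) + 1 := by exact_mod_cast h6
  push_cast at hsum ⊢
  linarith

lemma caseD_odd (n s : ℕ) (hs : 2 ≤ s) (ho : Odd n) (h6 : 6*s < n+1)
    (x : Fin (n+1) → ℝ) (hx : x ∈ Vset n s) :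
    3 * (s:ℝ) / 2 < qns n s ((wOdd n s + (tns n s + x)) - vns n s) := by
  obtain ⟨hx1, hx2⟩ := hx
  choose m hm using hx1
  obtain ⟨p, hp⟩ := ho
  have hk : ((n:ℝ) + 1 - 4*s)/2 = ((p + 1 - 2*s : ℤ) : ℝ) := by
    subst hp; push_cast; ring
  have key : ∀ i : Fin (n+1),
      (1/2) * (if (i:ℕ) < 2*s then (1:ℝ) else 0)
        + (-(1/4)) * (if (i:ℕ) < 4*s then (1:ℝ) else 0) + (1/4 : ℝ)
      ≤ (if (i:ℕ) < 4*s then (2:ℝ) else 1) * (((wOdd n s + (tns n s + x)) - vns n s) i)^2 := by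
    intro i
    simp only [Pi.sub_apply, Pi.add_apply, wOdd, e1, tns, vns, hm i]
    rcases lt_or_ge (i:ℕ) (2*s) with h2 | h2
    · have h4i : (i:ℕ) < 4*s := by omega
      simp only [if_pos h2, if_pos h4i]
      by_cases h1 : (i:ℕ) = 1
      · simp only [if_pos h1]
        rw [hk]
        have hj := imul2 (m i - (p + 1 - 2*s))
        push_cast at hj ⊢
        nlinarith [hj]
      · simp only [if_neg h1]
        nlinarith [imul2 (m i)]
    · have h2' : ¬ (i:ℕ) < 2*s := by omega
      have h1 : ¬ (i:ℕ) = 1 := by omega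
      rcases lt_or_ge (i:ℕ) (4*s) with h4i | h4i
      · simp only [if_neg h2', if_pos h4i, if_neg h1]
        nlinarith [sq_nonneg ((m i : ℝ) - 1)]
      · have h4i' : ¬ (i:ℕ) < 4*s := by omega
        simp only [if_neg h2', if_neg h4i', if_neg h1]
        nlinarith [imul2 (m i)]
  have hsum : ∑ i : Fin (n+1),
      ((1/2) * (if (i:ℕ) < 2*s then (1:ℝ) else 0)
        + (-(1/4)) * (if (i:ℕ) < 4*s then (1:ℝ) else 0) + (1/4 : ℝ))
      ≤ qns n s ((wOdd n s + (tns n s + x)) - vns n s) := by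
    rw [qns]; exact Finset.sum_le_sum (fun i _ => key i)
  rw [Finset.sum_add_distrib, Finset.sum_add_distrib, ← Finset.mul_sum, ← Finset.mul_sum,
    sum_ind_s15 n (2*s) (by omega) 1, sum_ind_s15 n (4*s) (by omega) 1,
    Finset.sum_const, Finset.card_univ, Fintype.card_fin, nsmul_eq_mul] at hsum
  have h6' : 6 * (s:ℝ) < (n:ℝ) + 1 := by exact_mod_cast h6
  push_cast at hsum ⊢
  linarith

lemma caseC_even (n s : ℕ) (hs : 2 ≤ s) (h6 : 6*s < n)
    (x : Fin (n+1) → ℝ) (hx : x ∈ Vset n s) :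
    3 * (s:ℝ) / 2 < qns n s ((wEven n s + x) - vns n s) := by
  obtain ⟨hx1, hx2⟩ := hx
  choose m hm using hx1
  have key : ∀ i : Fin (n+1),
      (-(1/2)) * (if (i:ℕ) < 2*s then (1:ℝ) else 0)
        + (1/2) * (if (i:ℕ) < 4*s then (1:ℝ) else 0)
        + (-(1/4)) * (if (i:ℕ) < 4*s+1 then (1:ℝ) else 0) + (1/4 : ℝ)
      ≤ (if (i:ℕ) < 4*s then (2:ℝ) else 1) * (((wEven n s + x) - vns n s) i)^2 := by
    intro i
    simp only [Pi.sub_apply, Pi.add_apply, wEven, e1, vns, hm i]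
    rcases lt_or_ge (i:ℕ) (2*s) with h2 | h2
    · have h4i : (i:ℕ) < 4*s := by omega
      have h4i1 : (i:ℕ) < 4*s+1 := by omega
      simp only [if_pos h2, if_pos h4i, if_pos h4i1]
      by_cases h1 : (i:ℕ) = 1
      · simp only [if_pos h1]
        nlinarith [sq_nonneg ((1/4 - ((n:ℝ) - 4*s)/2 * 1) + (m i : ℝ) - 1/4)]
      · simp only [if_neg h1]
        nlinarith [sq_nonneg ((m i : ℝ))]
    · have h2' : ¬ (i:ℕ) < 2*s := by omega
      have h1 : ¬ (i:ℕ) = 1 := by omega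
      rcases lt_or_ge (i:ℕ) (4*s) with h4i | h4i
      · have h4i1 : (i:ℕ) < 4*s+1 := by omega
        simp only [if_neg h2', if_pos h4i, if_pos h4i1, if_neg h1]
        nlinarith [imul1 (m i)]
      · have h4i' : ¬ (i:ℕ) < 4*s := by omega
        rcases eq_or_lt_of_le h4i with hq | hq
        · have hq' : (i:ℕ) = 4*s := hq.symm
          have h4i1 : (i:ℕ) < 4*s+1 := by omega
          simp only [if_neg h2', if_neg h4i', if_pos hq', if_pos h4i1, if_neg h1]
          nlinarith [sq_nonneg ((m i : ℝ))]
        · have hq' : ¬ (i:ℕ) = 4*s := by omega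
          have h4i1 : ¬ (i:ℕ) < 4*s+1 := by omega
          simp only [if_neg h2', if_neg h4i', if_neg hq', if_neg h4i1, if_neg h1]
          nlinarith [imul2 (m i)]
  have hsum : ∑ i : Fin (n+1),
      ((-(1/2)) * (if (i:ℕ) < 2*s then (1:ℝ) else 0)
        + (1/2) * (if (i:ℕ) < 4*s then (1:ℝ) else 0)
        + (-(1/4)) * (if (i:ℕ) < 4*s+1 then (1:ℝ) else 0) + (1/4 : ℝ))
      ≤ qns n s ((wEven n s + x) - vns n s) := by
    rw [qns]; exact Finset.sum_le_sum (fun i _ => key i)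
  rw [Finset.sum_add_distrib, Finset.sum_add_distrib, Finset.sum_add_distrib,
    ← Finset.mul_sum, ← Finset.mul_sum, ← Finset.mul_sum,
    sum_ind_s15 n (2*s) (by omega) 1, sum_ind_s15 n (4*s) (by omega) 1,
    sum_ind_s15 n (4*s+1) (by omega) 1,
    Finset.sum_const, Finset.card_univ, Fintype.card_fin, nsmul_eq_mul] at hsum
  have h6' : 6 * (s:ℝ) < (n:ℝ) := by exact_mod_cast h6
  push_cast at hsum ⊢
  linarith

lemma caseD_even (n s : ℕ) (hs : 2 ≤ s) (he : Even n) (h6 : 6*s < n)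
    (x : Fin (n+1) → ℝ) (hx : x ∈ Vset n s) :
    3 * (s:ℝ) / 2 < qns n s ((wEven n s + (tns n s + x)) - vns n s) := by
  obtain ⟨hx1, hx2⟩ := hx
  choose m hm using hx1
  obtain ⟨p, hp⟩ := he
  have hk : ((n:ℝ) - 4*s)/2 = ((p - 2*s : ℤ) : ℝ) := by
    subst hp; push_cast; ring
  have key : ∀ i : Fin (n+1),
      (1/2) * (if (i:ℕ) < 2*s then (1:ℝ) else 0)
        + (-(1/4)) * (if (i:ℕ) < 4*s+1 then (1:ℝ) else 0) + (1/4 : ℝ)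
      ≤ (if (i:ℕ) < 4*s then (2:ℝ) else 1) * (((wEven n s + (tns n s + x)) - vns n s) i)^2 := by
    intro i
    simp only [Pi.sub_apply, Pi.add_apply, wEven, e1, tns, vns, hm i]
    rcases lt_or_ge (i:ℕ) (2*s) with h2 | h2
    · have h4i : (i:ℕ) < 4*s := by omega
      have h4i1 : (i:ℕ) < 4*s+1 := by omega
      simp only [if_pos h2, if_pos h4i, if_pos h4i1]
      by_cases h1 : (i:ℕ) = 1
      · simp only [if_pos h1]
        rw [hk]
        have hj := imul2 (m i - (p - 2*s))
        push_cast at hj ⊢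
        nlinarith [hj]
      · simp only [if_neg h1]
        nlinarith [imul2 (m i)]
    · have h2' : ¬ (i:ℕ) < 2*s := by omega
      have h1 : ¬ (i:ℕ) = 1 := by omega
      rcases lt_or_ge (i:ℕ) (4*s) with h4i | h4i
      · have h4i1 : (i:ℕ) < 4*s+1 := by omega
        simp only [if_neg h2', if_pos h4i, if_pos h4i1, if_neg h1]
        nlinarith [sq_nonneg ((m i : ℝ) - 1)]
      · have h4i' : ¬ (i:ℕ) < 4*s := by omega
        rcases eq_or_lt_of_le h4i with hq | hq
        · have hq' : (i:ℕ) = 4*s := hq.symm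
          have h4i1 : (i:ℕ) < 4*s+1 := by omega
          simp only [if_neg h2', if_neg h4i', if_pos hq', if_pos h4i1, if_neg h1]
          nlinarith [sq_nonneg ((m i : ℝ))]
        · have hq' : ¬ (i:ℕ) = 4*s := by omega
          have h4i1 : ¬ (i:ℕ) < 4*s+1 := by omega
          simp only [if_neg h2', if_neg h4i', if_neg hq', if_neg h4i1, if_neg h1]
          nlinarith [imul2 (m i)]
  have hsum : ∑ i : Fin (n+1),
      ((1/2) * (if (i:ℕ) < 2*s then (1:ℝ) else 0)
        + (-(1/4)) * (if (i:ℕ) < 4*s+1 then (1:ℝ) else 0) + (1/4 : ℝ))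
      ≤ qns n s ((wEven n s + (tns n s + x)) - vns n s) := by
    rw [qns]; exact Finset.sum_le_sum (fun i _ => key i)
  rw [Finset.sum_add_distrib, Finset.sum_add_distrib,
    ← Finset.mul_sum, ← Finset.mul_sum,
    sum_ind_s15 n (2*s) (by omega) 1, sum_ind_s15 n (4*s+1) (by omega) 1,
    Finset.sum_const, Finset.card_univ, Fintype.card_fin, nsmul_eq_mul] at hsum
  have h6' : 6 * (s:ℝ) < (n:ℝ) := by exact_mod_cast h6
  push_cast at hsum ⊢
  linarith

end Helpers

/-- If `6s < n+1` (`n` odd) resp. `6s < n` (`n` even), then `P(n,s)` is a Delaunay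
polytope of the larger lattice `V⁴_{n,s}` with respect to `q_{n,s}`. -/
theorem Pns_delaunay_in_V4 (n s : ℕ) (hs : 2 ≤ s)
    (hodd : Odd n → 6 * s < n + 1) (heven : Even n → 6 * s < n) :
    (∀ v ∈ Sns n s, qns n s (v - vns n s) = 3 * (s : ℝ) / 2) ∧
    (∀ u ∈ V4 n s \ Sns n s, 3 * (s : ℝ) / 2 < qns n s (u - vns n s)) := by
  have h6 : 6*s < n+1 := by
    rcases Nat.even_or_odd n with he | ho
    · have := heven he; omega
    · exact hodd ho
  have h4 : 4*s ≤ n+1 := by omega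
  constructor
  · intro v hv
    rcases hv with hw | ⟨w, hw, rfl⟩
    · exact qW n s h4 v hw
    · have hneg : ((2:ℝ) • vns n s - w) - vns n s = -(w - vns n s) := by
        funext i
        simp only [Pi.smul_apply, Pi.sub_apply, Pi.neg_apply, smul_eq_mul]
        ring
      rw [hneg, q_neg, qW n s h4 w hw]
  · rintro u ⟨hu4, huS⟩
    rcases hu4 with h2 | ⟨y, hy, rfl⟩
    · rcases h2 with hV | ⟨x, hx, rfl⟩
      · exact caseA n s h4 u hV (fun h => huS (Set.mem_union_left _ h))
      · exact caseB n s h4 x hx huS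
    · rcases hy with hV | ⟨x, hx, rfl⟩
      · rcases Nat.even_or_odd n with he | ho
        · rw [show wns n s = wEven n s from if_neg (Nat.not_odd_iff_even.mpr he)]
          exact caseC_even n s hs (heven he) y hV
        · rw [show wns n s = wOdd n s from if_pos ho]
          exact caseC_odd n s hs ho (hodd ho) y hV
      · rcases Nat.even_or_odd n with he | ho
        · rw [show wns n s = wEven n s from if_neg (Nat.not_odd_iff_even.mpr he)]
          exact caseD_even n s hs he (heven he) x hx
        · rw [show wns n s = wOdd n s from if_pos ho]
          exact caseD_odd n s hs ho (hodd ho) x hx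
end
end
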